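/- The Weber function has exactly one zero, located to the right of 3: under the stated hypotheses, there exists a unique z ∈ ℝ with W(z) = 0, and this z satisfies z > 3. -/

import Mathlib

open Filter Real Set Topology

/-- The Weber function with small frequency has exactly one zero, located to the
right of `3`. -/
theorem weber_unique_zero
    (lam : ℝ) (hlam1 : 1 < lam) (hlam2 : lam < 2)
    (W : ℝ → ℝ) (hW : ContDiff ℝ 2 W)
    (hWeq : ∀ x, deriv (deriv W) x = (x ^ 2 - lam) * W x)
    (hWpos : ∀ x ≤ (3 : ℝ), 0 < W x)
    (hWlim : Tendsto W atTop atBot) :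
    ∃ z : ℝ, W z = 0 ∧ z > 3 ∧ ∀ w : ℝ, W w = 0 → w = z := by
  have hWc : Continuous W := hW.continuous
  have hW1 : Differentiable ℝ W := hW.differentiable two_ne_zero
  have hW'c : Continuous (deriv W) := hW.continuous_deriv one_le_two
  have hW'd : Differentiable ℝ (deriv W) := by
    have h2 : ContDiff ℝ ((1:ℕ)+1) W := by exact_mod_cast hW
    exact ((contDiff_succ_iff_deriv.mp h2).2.2).differentiable (by norm_num)
  have hd1 : ∀ x, HasDerivAt W (deriv W x) x := fun x => (hW1 x).hasDerivAt
  have hd2 : ∀ x, HasDerivAt (deriv W) ((x ^ 2 - lam) * W x) x := fun x => by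
    have h := (hW'd x).hasDerivAt
    rwa [hWeq x] at h
  set S : Set ℝ := {x | W x ≤ 0} with hS
  have hSne : S.Nonempty := by
    obtain ⟨x, hx⟩ := (hWlim.eventually (eventually_le_atBot 0)).exists
    exact ⟨x, hx⟩
  have hSlb : ∀ x ∈ S, (3:ℝ) ≤ x := by
    intro x hx
    by_contra h
    push_neg at h
    exact absurd hx (not_le.mpr (hWpos x h.le))
  have hSbd : BddBelow S := ⟨3, hSlb⟩
  set z := sInf S with hz
  have hz3 : (3:ℝ) ≤ z := le_csInf hSne hSlb
  have hzS : z ∈ S := (isClosed_le hWc continuous_const).csInf_mem hSne hSbd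
  have hlt : ∀ x, x < z → 0 < W x := by
    intro x hx
    by_contra h
    exact absurd (csInf_le hSbd (le_of_not_gt h : W x ≤ 0)) (not_le.mpr hx)
  have hz3' : (3:ℝ) < z :=
    lt_of_le_of_ne hz3 (fun h => absurd hzS (not_le.mpr (hWpos z (le_of_eq h.symm))))
  have hWz : W z = 0 := by
    refine le_antisymm hzS ?_
    have ht : Tendsto W (𝓝[<] z) (𝓝 (W z)) :=
      hWc.continuousAt.tendsto.mono_left nhdsWithin_le_nhds
    exact ge_of_tendsto ht (eventually_nhdsWithin_of_forall (fun x hx => (hlt x hx).le))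
  have hW'le : deriv W z ≤ 0 := by
    have hslope : Tendsto (slope W z) (𝓝[<] z) (𝓝 (deriv W z)) :=
      (hasDerivAt_iff_tendsto_slope.mp (hd1 z)).mono_left
        (nhdsWithin_mono z (fun x hx => ne_of_lt hx))
    refine le_of_tendsto hslope (eventually_nhdsWithin_of_forall (fun x hx => ?_))
    have h1 : 0 < W x := hlt x hx
    have h2 : x - z < 0 := sub_neg.mpr hx
    have hsl : slope W z x = W x / (x - z) := by
      rw [slope_def_field, hWz, sub_zero]
    rw [hsl]
    exact le_of_lt (div_neg_of_pos_of_neg h1 h2)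
  have hW'neg : deriv W z < 0 := by
    rcases lt_or_eq_of_le hW'le with h | h
    · exact h
    exfalso
    set u : ℝ → ℝ := fun t => (W (z - t)) ^ 2 + (deriv W (z - t)) ^ 2 with hu
    have hud : ∀ t, HasDerivAt u
        ((-2) * W (z - t) * deriv W (z - t) * (1 + ((z - t) ^ 2 - lam))) t := by
      intro t
      have hg : HasDerivAt (fun t : ℝ => z - t) (-1) t := by
        simpa using (hasDerivAt_id t).const_sub z
      have h1 : HasDerivAt (fun t => W (z - t)) (deriv W (z - t) * (-1)) t :=
        (hd1 (z - t)).comp t hg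
      have h2 : HasDerivAt (fun t => deriv W (z - t))
          ((((z - t) ^ 2 - lam) * W (z - t)) * (-1)) t :=
        (hd2 (z - t)).comp t hg
      have h3 : HasDerivAt u _ t := (h1.pow 2).add (h2.pow 2)
      convert h3 using 1
      push_cast
      ring
    have hb : (0:ℝ) ≤ z - 3 := by linarith
    have key : ∀ x ∈ Icc (0:ℝ) (z-3), ‖u x‖ ≤ gronwallBound 0 (1 + z^2) 0 (x - 0) := by
      apply norm_le_gronwallBound_of_norm_deriv_right_le
        (f' := fun t => (-2) * W (z-t) * deriv W (z-t) * (1 + ((z - t)^2 - lam)))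
      · exact (((hWc.comp (continuous_const.sub continuous_id)).pow 2).add
          ((hW'c.comp (continuous_const.sub continuous_id)).pow 2)).continuousOn
      · intro x _
        exact (hud x).hasDerivWithinAt
      · show ‖u 0‖ ≤ 0
        simp [hu, hWz, h]
      · intro t ht
        obtain ⟨ht0, ht1⟩ := ht
        have h3 : (3:ℝ) < z - t := by linarith [ht1]
        have h4 : z - t ≤ z := by linarith
        set a := W (z - t) with ha
        set b' := deriv W (z - t) with hb'
        set c : ℝ := 1 + ((z - t) ^ 2 - lam) with hcc
        have hc1 : 0 < c := by rw [hcc]; nlinarith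
        have hc2 : c ≤ 1 + z^2 := by rw [hcc]; nlinarith
        rw [Real.norm_eq_abs, Real.norm_eq_abs, abs_of_nonneg (by positivity : (0:ℝ) ≤ a^2 + b'^2)]
        rw [abs_le]
        constructor
        · nlinarith [mul_nonneg (sq_nonneg (a + b')) hc1.le,
            mul_nonneg (sq_nonneg (a - b')) hc1.le,
            mul_nonneg (add_nonneg (sq_nonneg a) (sq_nonneg b')) (sub_nonneg.mpr hc2)]
        · nlinarith [mul_nonneg (sq_nonneg (a + b')) hc1.le,
            mul_nonneg (sq_nonneg (a - b')) hc1.le,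
            mul_nonneg (add_nonneg (sq_nonneg a) (sq_nonneg b')) (sub_nonneg.mpr hc2)]
    have h30 := key (z-3) ⟨hb, le_refl _⟩
    rw [gronwallBound_ε0_δ0] at h30
    have hu3 : u (z-3) = W 3 ^ 2 + deriv W 3 ^ 2 := by
      simp only [hu]
      norm_num
    have hW3 := hWpos 3 le_rfl
    rw [Real.norm_eq_abs, abs_of_nonneg (by positivity : (0:ℝ) ≤ u (z-3)), hu3] at h30
    nlinarith [sq_nonneg (deriv W 3)]
  have hneg : ∀ x, z < x → W x < 0 := by
    by_contra hcon
    push_neg at hcon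
    obtain ⟨y, hy1, hy2⟩ := hcon
    set B : Set ℝ := {x | z < x ∧ 0 ≤ W x} with hB
    have hBne : B.Nonempty := ⟨y, hy1, hy2⟩
    have hBbd : BddBelow B := ⟨z, fun x hx => hx.1.le⟩
    set y₀ := sInf B with hy₀
    have hy₀z : z ≤ y₀ := le_csInf hBne fun x hx => hx.1.le
    have hy₀cl : y₀ ∈ closure B := csInf_mem_closure hBne hBbd
    have hy₀W : 0 ≤ W y₀ := by
      have hcl : closure B ⊆ {x | 0 ≤ W x} :=
        closure_minimal (fun x hx => hx.2) (isClosed_le continuous_const hWc)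
      exact hcl hy₀cl
    have hmid : ∀ t, z < t → t < y₀ → W t < 0 := by
      intro t ht1 ht2
      by_contra hcon2
      exact absurd (csInf_le hBbd ⟨ht1, le_of_not_gt hcon2⟩) (not_le.mpr ht2)
    rcases eq_or_lt_of_le hy₀z with heq | hlt'
    · have hzB : z ∈ closure B := heq ▸ hy₀cl
      have hne : (𝓝[B] z).NeBot := mem_closure_iff_nhdsWithin_neBot.mp hzB
      have hmono : 𝓝[B] z ≤ 𝓝[≠] z := nhdsWithin_mono z (fun x hx => ne_of_gt hx.1)
      have hslope : Tendsto (slope W z) (𝓝[B] z) (𝓝 (deriv W z)) :=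
        (hasDerivAt_iff_tendsto_slope.mp (hd1 z)).mono_left hmono
      have hge : 0 ≤ deriv W z := by
        refine ge_of_tendsto hslope (eventually_nhdsWithin_of_forall fun x hx => ?_)
        have h1 : 0 ≤ W x := hx.2
        have h2 : 0 < x - z := sub_pos.mpr hx.1
        rw [slope_def_field, hWz, sub_zero]
        positivity
      linarith
    · have hanti : AntitoneOn (deriv W) (Icc z y₀) := by
        apply antitoneOn_of_deriv_nonpos (convex_Icc z y₀) hW'c.continuousOn
        · intro x _
          exact (hW'd x).differentiableWithinAt
        · intro x hx
          rw [interior_Icc] at hx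
          rw [hWeq x]
          have hx1 : (3:ℝ) < x := lt_trans hz3' hx.1
          have hWx : W x < 0 := hmid x hx.1 hx.2
          have hpos : 0 < x ^ 2 - lam := by nlinarith
          nlinarith [mul_pos hpos (neg_pos.mpr hWx)]
      have hW'lt : ∀ x ∈ Ioo z y₀, deriv W x < 0 := by
        intro x hx
        have hle := hanti ⟨le_refl z, hlt'.le⟩ ⟨hx.1.le, hx.2.le⟩ hx.1.le
        linarith
      have hSA : StrictAntiOn W (Icc z y₀) := by
        apply strictAntiOn_of_deriv_neg (convex_Icc z y₀) hWc.continuousOn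
        intro x hx
        rw [interior_Icc] at hx
        exact hW'lt x hx
      have hfin := hSA ⟨le_refl z, hlt'.le⟩ ⟨hy₀z, le_refl y₀⟩ hlt'
      rw [hWz] at hfin
      linarith
  refine ⟨z, hWz, hz3', fun w hw => ?_⟩
  rcases lt_trichotomy w z with h | h | h
  · exact absurd hw (ne_of_gt (hlt w h))
  · exact h
  · exact absurd hw (ne_of_lt (hneg w h))
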